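/- For any two density operators ρ₀ and ρ₁ on a finite-dimensional Hilbert space, there exists a two-outcome projective measurement {Π₀, Π₁} with Π₀ + Π₁ = I such that (1/2)Tr(Π₀ρ₀) + (1/2)Tr(Π₁ρ₁) = (1/2)(1 + (1/2)‖ρ₀ − ρ₁‖₁). -/

import Mathlib

open Matrix Kronecker BigOperators ComplexOrder

noncomputable def traceNorm {n : Type*} [Fintype n] [DecidableEq n] (A : Matrix n n ℂ) : ℝ :=
  (let hA := Matrix.posSemidef_conjTranspose_mul_self A
   (hA.1.eigenvectorUnitary.1 * diagonal ((↑) ∘ (√·) ∘ hA.1.eigenvalues) *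
     (star hA.1.eigenvectorUnitary : Matrix n n ℂ) : Matrix n n ℂ)).trace.re

open scoped Classical in
noncomputable def matSqrt {n : Type*} [Fintype n] [DecidableEq n] (A : Matrix n n ℂ) : Matrix n n ℂ :=
  if h : A.PosSemidef then h.1.eigenvectorUnitary.1 * diagonal ((↑) ∘ (√·) ∘ h.1.eigenvalues) *
    (star h.1.eigenvectorUnitary : Matrix n n ℂ) else 0

noncomputable def fidelity {n : Type*} [Fintype n] [DecidableEq n] (ρ σ : Matrix n n ℂ) : ℝ :=
  (traceNorm (matSqrt ρ * matSqrt σ)) ^ 2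

def IsDensity {n : Type*} [Fintype n] [DecidableEq n] (ρ : Matrix n n ℂ) : Prop :=
  ρ.PosSemidef ∧ ρ.trace = 1

def SeparableState {a b : Type*} [Fintype a] [Fintype b] [DecidableEq a] [DecidableEq b]
    (ρ : Matrix (a × b) (a × b) ℂ) : Prop :=
  ∃ (m : ℕ) (p : Fin m → ℝ) (σ : Fin m → Matrix a a ℂ) (τ : Fin m → Matrix b b ℂ),
    (∀ i, 0 ≤ p i) ∧ (∑ i, p i = 1) ∧ (∀ i, IsDensity (σ i)) ∧ (∀ i, IsDensity (τ i)) ∧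
    ρ = ∑ i, (p i : ℂ) • (σ i ⊗ₖ τ i)

noncomputable def permUnitary {b : Type*} [Fintype b] [DecidableEq b] {k : ℕ}
    (π : Equiv.Perm (Fin k)) : Matrix (Fin k → b) (Fin k → b) ℂ :=
  Equiv.Perm.permMatrix ℂ (Equiv.arrowCongr π (Equiv.refl b))

def IsKExtension {a b : Type*} [Fintype a] [Fintype b] [DecidableEq a] [DecidableEq b] (m : ℕ)
    (ρ : Matrix (a × b) (a × b) ℂ)
    (ω : Matrix (a × (Fin (m + 1) → b)) (a × (Fin (m + 1) → b)) ℂ) : Prop :=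
  ω.PosSemidef ∧ ω.trace = 1 ∧
  (∀ π : Equiv.Perm (Fin (m + 1)),
    ((1 : Matrix a a ℂ) ⊗ₖ permUnitary π) * ω * ((1 : Matrix a a ℂ) ⊗ₖ permUnitary π)ᴴ = ω) ∧
  (∀ p q : a × b, ρ p q = ∑ r : Fin m → b, ω (p.1, Fin.cons p.2 r) (q.1, Fin.cons q.2 r))

/-- `ρ` is `k`-extendible (with `k` copies of the `B` system). -/
def IsKExtendible {a b : Type*} [Fintype a] [Fintype b] [DecidableEq a] [DecidableEq b] (k : ℕ)
    (ρ : Matrix (a × b) (a × b) ℂ) : Prop :=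
  ∃ m : ℕ, k = m + 1 ∧ ∃ ω, IsKExtension m ρ ω

def IsPOVM {x b : Type*} [Fintype x] [Fintype b] [DecidableEq b] (Λ : x → Matrix b b ℂ) : Prop :=
  (∀ i, (Λ i).PosSemidef) ∧ ∑ i, Λ i = 1

noncomputable def povmOut {a b x : Type*} [Fintype a] [Fintype b] [Fintype x] [DecidableEq x]
    (Λ : x → Matrix b b ℂ) (X : Matrix (a × b) (a × b) ℂ) : Matrix (a × x) (a × x) ℂ :=
  fun p q => if p.2 = q.2 then ∑ j : b, ∑ j' : b, (Λ p.2) j j' * X (p.1, j') (q.1, j) else 0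

noncomputable def loccDist {a b : Type*} [Fintype a] [Fintype b] [DecidableEq a] [DecidableEq b]
    (ρ σ : Matrix (a × b) (a × b) ℂ) : ℝ :=
  sSup {r : ℝ | ∃ (x : Type) (_ : Fintype x) (_ : DecidableEq x) (Λ : x → Matrix b b ℂ),
    IsPOVM Λ ∧ r = traceNorm (povmOut Λ ρ - povmOut Λ σ)}

theorem helstrom_measurement {n : Type*} [Fintype n] [DecidableEq n]
    (ρ₀ ρ₁ : Matrix n n ℂ) (h₀ : IsDensity ρ₀) (h₁ : IsDensity ρ₁) :
    ∃ P₀ P₁ : Matrix n n ℂ, P₀.IsHermitian ∧ P₁.IsHermitian ∧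
      P₀ * P₀ = P₀ ∧ P₁ * P₁ = P₁ ∧ P₀ + P₁ = 1 ∧
      (1 / 2) * (P₀ * ρ₀).trace.re + (1 / 2) * (P₁ * ρ₁).trace.re
        = (1 / 2) * (1 + (1 / 2) * traceNorm (ρ₀ - ρ₁)) := by
  classical
  have hΔ : (ρ₀ - ρ₁).IsHermitian := h₀.1.1.sub h₁.1.1
  set U : Matrix n n ℂ := (hΔ.eigenvectorUnitary : Matrix n n ℂ) with hUdef
  have hU1 : U * star U = 1 := mem_unitaryGroup_iff.mp hΔ.eigenvectorUnitary.2
  have hU2 : star U * U = 1 := mem_unitaryGroup_iff'.mp hΔ.eigenvectorUnitary.2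
  set μ : n → ℝ := hΔ.eigenvalues with hμdef
  have hspec : ρ₀ - ρ₁ = U * diagonal (fun i => (μ i : ℂ)) * star U := by
    exact hΔ.spectral_theorem
  have conj_mul : ∀ d e : n → ℂ, (U * diagonal d * star U) * (U * diagonal e * star U)
      = U * diagonal (fun i => d i * e i) * star U := by
    intro d e
    calc (U * diagonal d * star U) * (U * diagonal e * star U)
        = U * diagonal d * ((star U * U) * (diagonal e * star U)) := by
          simp only [mul_assoc]
      _ = U * (diagonal d * diagonal e) * star U := by rw [hU2, one_mul]; simp only [mul_assoc]
      _ = U * diagonal (fun i => d i * e i) * star U := by rw [diagonal_mul_diagonal]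
  have tr_conj : ∀ d : n → ℂ, (U * diagonal d * star U).trace = ∑ i, d i := by
    intro d
    rw [trace_mul_comm, ← mul_assoc, hU2, one_mul, trace_diagonal]
  have herm : ∀ d : n → ℝ, (U * diagonal (fun i => (d i : ℂ)) * star U).IsHermitian := by
    intro d
    have : (diagonal (fun i => (d i : ℂ))).IsHermitian :=
      isHermitian_diagonal_of_self_adjoint _ (funext fun i => Complex.conj_ofReal (d i))
    simpa [star_eq_conjTranspose] using isHermitian_mul_mul_conjTranspose U this
  set d₀ : n → ℂ := fun i => if 0 ≤ μ i then 1 else 0 with hd₀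
  set d₁ : n → ℂ := fun i => if 0 ≤ μ i then 0 else 1 with hd₁
  set s : ℝ := ∑ i, if 0 ≤ μ i then μ i else 0 with hs
  -- the square-root of (ρ₀-ρ₁)ᴴ(ρ₀-ρ₁)
  have habs : (U * diagonal (fun i => ((|μ i|:ℝ) : ℂ)) * star U)
      = (let hA := Matrix.posSemidef_conjTranspose_mul_self (ρ₀ - ρ₁);
          (hA.1.eigenvectorUnitary.1 * diagonal ((↑) ∘ (√·) ∘ hA.1.eigenvalues) *
            (star hA.1.eigenvectorUnitary : Matrix n n ℂ) : Matrix n n ℂ)) := by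
    have hB := (Matrix.posSemidef_conjTranspose_mul_self (ρ₀ - ρ₁)).1
    have hsa : IsSelfAdjoint (ρ₀ - ρ₁) := hΔ
    have hsq : (ρ₀ - ρ₁)ᴴ * (ρ₀ - ρ₁) = cfc (fun x : ℝ => x * x) (ρ₀ - ρ₁) := by
      rw [cfc_mul (fun x : ℝ => x) (fun x : ℝ => x) (ρ₀ - ρ₁), cfc_id' ℝ (ρ₀ - ρ₁), hΔ.eq]
    have key : cfc Real.sqrt ((ρ₀ - ρ₁)ᴴ * (ρ₀ - ρ₁)) = cfc (fun x : ℝ => |x|) (ρ₀ - ρ₁) := by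
      rw [hsq, ← cfc_comp Real.sqrt (fun x : ℝ => x * x) (ρ₀ - ρ₁)]
      congr 1
      funext x
      exact Real.sqrt_mul_self_eq_abs x
    rw [hB.cfc_eq, hΔ.cfc_eq] at key
    simp only [IsHermitian.cfc, Unitary.conjStarAlgAut_apply] at key
    exact key.symm
  have htn : traceNorm (ρ₀ - ρ₁) = ∑ i, |μ i| := by
    rw [traceNorm, ← habs, tr_conj, ← Complex.ofReal_sum, Complex.ofReal_re]
  have htr0 : ∑ i, μ i = 0 := by
    have h : (ρ₀ - ρ₁).trace = 0 := by rw [trace_sub, h₀.2, h₁.2, sub_self]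
    rw [hspec, tr_conj] at h
    exact_mod_cast h
  have habs2 : ∑ i, |μ i| = 2 * s := by
    have h : ∀ i, |μ i| = 2 * (if 0 ≤ μ i then μ i else 0) - μ i := by
      intro i
      by_cases hi : 0 ≤ μ i
      · rw [abs_of_nonneg hi, if_pos hi]; ring
      · rw [abs_of_neg (lt_of_not_ge hi), if_neg hi]; ring
    calc ∑ i, |μ i| = ∑ i, (2 * (if 0 ≤ μ i then μ i else 0) - μ i) :=
          Finset.sum_congr rfl fun i _ => h i
      _ = 2 * s - ∑ i, μ i := by rw [Finset.sum_sub_distrib, Finset.mul_sum]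
      _ = 2 * s := by rw [htr0, sub_zero]
  -- key trace identity
  have hPΔ : ((U * diagonal d₀ * star U) * (ρ₀ - ρ₁)).trace = (s : ℂ) := by
    rw [hspec, conj_mul, tr_conj]
    have h : ∀ i, d₀ i * ((μ i : ℝ) : ℂ) = (((if 0 ≤ μ i then μ i else 0 : ℝ)) : ℂ) := by
      intro i
      by_cases hi : 0 ≤ μ i <;> simp [hd₀, hi]
    rw [Finset.sum_congr rfl fun i _ => h i, ← Complex.ofReal_sum]
  have hProj : ∀ d : n → ℂ, (∀ i, d i * d i = d i) →
      (U * diagonal d * star U) * (U * diagonal d * star U) = U * diagonal d * star U := by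
    intro d hd
    rw [conj_mul, show (fun i => d i * d i) = d from funext hd]
  have hsumP : U * diagonal d₀ * star U + U * diagonal d₁ * star U = 1 := by
    have : U * diagonal d₀ * star U + U * diagonal d₁ * star U
        = U * (diagonal d₀ + diagonal d₁) * star U := by
      rw [mul_add, add_mul]
    have hde : (fun i => d₀ i + d₁ i) = fun _ => (1 : ℂ) := by
      funext i
      by_cases hi : 0 ≤ μ i <;> simp [hd₀, hd₁, hi]
    rw [this, diagonal_add, hde, diagonal_one, mul_one, hU1]
  refine ⟨U * diagonal d₀ * star U, U * diagonal d₁ * star U, ?_, ?_, ?_, ?_, hsumP, ?_⟩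
  · have := herm (fun i => if 0 ≤ μ i then 1 else 0)
    simpa [hd₀, apply_ite (fun x : ℝ => (x : ℂ))] using this
  · have := herm (fun i => if 0 ≤ μ i then 0 else 1)
    simpa [hd₁, apply_ite (fun x : ℝ => (x : ℂ))] using this
  · exact hProj d₀ fun i => by by_cases hi : 0 ≤ μ i <;> simp [hd₀, hi]
  · exact hProj d₁ fun i => by by_cases hi : 0 ≤ μ i <;> simp [hd₁, hi]
  · -- the probability identity
    have hP1 : U * diagonal d₁ * star U = 1 - U * diagonal d₀ * star U :=
      eq_sub_of_add_eq' hsumP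
    have hPΔ' : ((U * diagonal d₀ * star U) * ρ₀).trace
        - ((U * diagonal d₀ * star U) * ρ₁).trace = (s : ℂ) := by
      rw [← trace_sub, ← mul_sub]; exact hPΔ
    have hsum : ((U * diagonal d₀ * star U) * ρ₀).trace
        + ((U * diagonal d₁ * star U) * ρ₁).trace = 1 + (s : ℂ) := by
      rw [hP1, sub_mul, one_mul, trace_sub, h₁.2]
      linear_combination hPΔ'
    have hre : ((U * diagonal d₀ * star U) * ρ₀).trace.re
        + ((U * diagonal d₁ * star U) * ρ₁).trace.re = 1 + s := by
      have := congrArg Complex.re hsum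
      simpa [Complex.add_re] using this
    rw [htn, habs2]
    linarith
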